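/- For every integer k ≥ 3 there exists a monic polynomial ψ ∈ ℤ[X] of degree φ(k)/2 (where φ is Euler's totient function) whose image in ℚ[X] is irreducible, such that in the field of rational functions ℚ(q) one has Φ_k(q) = q^{φ(k)/2} · ψ(q + q⁻¹), where Φ_k denotes the k-th cyclotomic polynomial and q denotes the rational-function variable. -/

import Mathlib

open Polynomial Finset

noncomputable section

lemma cyc_dickson_monic_deg : ∀ n : ℕ, 1 ≤ n →
    (dickson 1 (1:ℤ) n).Monic ∧ (dickson 1 (1:ℤ) n).natDegree = n
  | 0, h => by omega
  | 1, _ => by simp [dickson_one, monic_X]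
  | 2, _ => by
      have h2 : dickson 1 (1:ℤ) 2 = X^2 - C 2 := by rw [dickson_two]; simp; ring
      rw [h2]
      refine ⟨monic_X_pow_sub_C 2 (by norm_num), ?_⟩
      compute_degree!
  | (n+3), _ => by
      obtain ⟨h1, h2⟩ := cyc_dickson_monic_deg (n+2) (by omega)
      rw [dickson_add_two]
      have hX : (X * dickson 1 (1:ℤ) (n+2)).Monic := (monic_X).mul h1
      have hdX : (X * dickson 1 (1:ℤ) (n+2)).natDegree = n + 3 := by
        rw [natDegree_mul X_ne_zero h1.ne_zero, natDegree_X, h2]; omega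
      have hle : (C (1:ℤ) * dickson 1 1 (n+1)).natDegree ≤ n + 1 :=
        le_trans natDegree_mul_le
          (by simp [(cyc_dickson_monic_deg (n+1) (by omega)).2])
      have hsmall : (C (1:ℤ) * dickson 1 1 (n+1)).degree < (X * dickson 1 (1:ℤ) (n+2)).degree := by
        calc (C (1:ℤ) * dickson 1 1 (n+1)).degree ≤ ((n+1 : ℕ) : WithBot ℕ) :=
              degree_le_of_natDegree_le hle
          _ < ((n+3 : ℕ) : WithBot ℕ) := by exact_mod_cast (by omega : n+1 < n+3)
          _ = (X * dickson 1 (1:ℤ) (n+2)).degree := by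
              rw [degree_eq_natDegree hX.ne_zero, hdX]
      exact ⟨hX.sub_of_left hsmall,
        by rw [natDegree_sub_eq_left_of_natDegree_lt (by omega : (C (1:ℤ) * dickson 1 1 (n+1)).natDegree < (X * dickson 1 (1:ℤ) (n+2)).natDegree), hdX]⟩


lemma cyclo_reverse_rat {k : ℕ} (hk : 2 ≤ k) :
    (cyclotomic k ℚ).reverse = cyclotomic k ℚ := by
  have hpos : 0 < k := by omega
  set ζ : ℂ := Complex.exp (2 * Real.pi * Complex.I / k) with hζdef
  have hζ : IsPrimitiveRoot ζ k := Complex.isPrimitiveRoot_exp k (by omega)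
  have hζne : ζ ≠ 0 := hζ.ne_zero (by omega)
  have hmin : cyclotomic k ℚ = minpoly ℚ ζ := cyclotomic_eq_minpoly_rat hζ hpos
  have hc0 : (cyclotomic k ℚ).coeff 0 = 1 := cyclotomic_coeff_zero ℚ (by omega)
  have hne : cyclotomic k ℚ ≠ 0 := (cyclotomic.monic k ℚ).ne_zero
  have htr : (cyclotomic k ℚ).natTrailingDegree = 0 := by
    rw [natTrailingDegree_eq_zero]
    exact Or.inr (by rw [hc0]; norm_num)
  have hdeg : (cyclotomic k ℚ).reverse.natDegree = (cyclotomic k ℚ).natDegree := by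
    rw [reverse_natDegree, htr, Nat.sub_zero]
  have hrevmonic : (cyclotomic k ℚ).reverse.Monic := by
    unfold Monic
    rw [reverse_leadingCoeff, trailingCoeff, htr, hc0]
  -- ζ is a root of the reverse
  have hroot : aeval ζ (cyclotomic k ℚ).reverse = 0 := by
    have hinvble : Invertible ζ⁻¹ := invertibleOfNonzero (inv_ne_zero hζne)
    have h1 : ⅟(ζ⁻¹) = ζ := by rw [invOf_eq_inv _, inv_inv]
    have hinv : IsPrimitiveRoot ζ⁻¹ k := hζ.inv
    have hroot' : IsRoot (cyclotomic k ℂ) ζ⁻¹ := hinv.isRoot_cyclotomic hpos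
    rw [← map_cyclotomic k (algebraMap ℚ ℂ), IsRoot, eval_map] at hroot'
    rw [aeval_def, ← h1, eval₂_reverse_eq_zero_iff]
    exact hroot'
  have hdvd : cyclotomic k ℚ ∣ (cyclotomic k ℚ).reverse := by
    rw [hmin]; exact minpoly.dvd ℚ ζ (by rw [← hmin]; exact hroot)
  obtain ⟨u, hu⟩ := hdvd
  have hune : u ≠ 0 := by
    rintro rfl
    rw [mul_zero, reverse_eq_zero] at hu
    exact hne hu
  have : u.natDegree = 0 := by
    have := natDegree_mul hne hune
    rw [← hu, hdeg] at this
    omega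
  have humonic : u.Monic := by
    have := hrevmonic
    rw [hu] at this
    exact (cyclotomic.monic k ℚ).of_mul_monic_left this
  have : u = 1 := humonic.natDegree_eq_zero.mp this
  rw [hu, this, mul_one]

lemma cyclo_palindrome {k : ℕ} (hk : 2 ≤ k) {j : ℕ} (hj : j ≤ k.totient) :
    (cyclotomic k ℤ).coeff (k.totient - j) = (cyclotomic k ℤ).coeff j := by
  have h := cyclo_reverse_rat hk
  have hd : (cyclotomic k ℚ).natDegree = k.totient := natDegree_cyclotomic k ℚ
  have : (cyclotomic k ℚ).coeff j = (cyclotomic k ℚ).coeff (k.totient - j) := by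
    conv_lhs => rw [← h, coeff_reverse, revAt_le (hd ▸ hj : j ≤ (cyclotomic k ℚ).natDegree), hd]
  have hcast : ∀ m : ℕ, (cyclotomic k ℚ).coeff m = ((cyclotomic k ℤ).coeff m : ℚ) := by
    intro m
    rw [← map_cyclotomic k (Int.castRingHom ℚ), coeff_map]
    rfl
  rw [hcast, hcast] at this
  exact_mod_cast this.symm




abbrev Fq := RatFunc ℚ
abbrev qX : Fq := RatFunc.X

lemma qX_ne : (qX : Fq) ≠ 0 := RatFunc.X_ne_zero

lemma pow_inv_pow {i d : ℕ} (h : i ≤ d) : (qX : Fq) ^ d * (qX⁻¹) ^ i = qX ^ (d - i) := by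
  rw [inv_pow, ← pow_sub₀ _ qX_ne h]

lemma aeval_qX_eq_algebraMap (p : ℚ[X]) :
    aeval (qX : Fq) p = algebraMap ℚ[X] Fq p := by
  rw [show (qX : Fq) = algebraMap ℚ[X] Fq X from rfl, aeval_algebraMap_apply,
    aeval_X_left_apply]

lemma aeval_qX_injective : Function.Injective (fun p : ℚ[X] => aeval (qX : Fq) p) := by
  simpa only [aeval_qX_eq_algebraMap] using RatFunc.algebraMap_injective ℚ

lemma aeval_dickson (i : ℕ) :
    aeval ((qX : Fq) + qX⁻¹) (dickson 1 (1:ℤ) i) = qX ^ i + (qX⁻¹) ^ i := by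
  rw [aeval_def, eval₂_eq_eval_map, map_dickson, map_one,
    dickson_one_one_eval_add_inv _ _ (mul_inv_cancel₀ qX_ne)]

lemma aeval_dickson_rat (i : ℕ) :
    aeval ((qX : Fq) + qX⁻¹) (dickson 1 (1:ℚ) i) = qX ^ i + (qX⁻¹) ^ i := by
  rw [aeval_def, eval₂_eq_eval_map, map_dickson, map_one,
    dickson_one_one_eval_add_inv _ _ (mul_inv_cancel₀ qX_ne)]

/-- transform: `T h` is the polynomial with `T h (q) = q ^ deg h * h (q + q⁻¹)`. -/
noncomputable def Tpoly (h : ℚ[X]) : ℚ[X] :=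
  ∑ i ∈ Finset.range (h.natDegree + 1), C (h.coeff i) * (X ^ 2 + 1) ^ i * X ^ (h.natDegree - i)

lemma aeval_Tpoly (h : ℚ[X]) :
    aeval (qX : Fq) (Tpoly h) = qX ^ h.natDegree * aeval ((qX : Fq) + qX⁻¹) h := by
  have hq2 : (qX:Fq) ^ 2 * qX⁻¹ = qX := by
    rw [sq, mul_assoc, mul_inv_cancel₀ qX_ne, mul_one]
  have hc : (qX : Fq) + qX⁻¹ = (qX ^ 2 + 1) * qX⁻¹ := by
    rw [add_mul, one_mul, hq2]
  rw [Tpoly, map_sum, aeval_eq_sum_range (p := h) ((qX : Fq) + qX⁻¹), Finset.mul_sum]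
  refine Finset.sum_congr rfl fun i hi => ?_
  rw [Finset.mem_range] at hi
  simp only [map_mul, map_pow, map_add, aeval_X, aeval_C, map_one]
  rw [Algebra.smul_def, hc, mul_pow, ← pow_inv_pow (show i ≤ h.natDegree by omega)]
  ring

lemma coeff_Tpoly (h : ℚ[X]) :
    (Tpoly h).coeff (2 * h.natDegree) = h.leadingCoeff := by
  rw [Tpoly, finset_sum_coeff, Finset.sum_eq_single h.natDegree]
  · have hm : ((X:ℚ[X]) ^ 2 + 1).Monic := by
      have := monic_X_pow_add (p := (1 : ℚ[X])) (n := 2) (by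
        simpa using (degree_one_le.trans (by norm_num)))
      simpa using this
    have hd : (((X:ℚ[X]) ^ 2 + 1) ^ h.natDegree).natDegree = 2 * h.natDegree := by
      rw [natDegree_pow]
      have : ((X:ℚ[X]) ^ 2 + 1).natDegree = 2 := by compute_degree!
      rw [this]; ring
    rw [Nat.sub_self, pow_zero, mul_one, coeff_C_mul, ← hd, (hm.pow _).coeff_natDegree, mul_one]
    rfl
  · intro i hi hne
    rw [Finset.mem_range] at hi
    apply coeff_eq_zero_of_natDegree_lt
    calc (C (h.coeff i) * ((X:ℚ[X]) ^ 2 + 1) ^ i * X ^ (h.natDegree - i)).natDegree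
        ≤ (C (h.coeff i) * ((X:ℚ[X]) ^ 2 + 1) ^ i).natDegree + (h.natDegree - i) := by
          refine le_trans natDegree_mul_le ?_
          rw [natDegree_X_pow]
      _ ≤ (0 + 2 * i) + (h.natDegree - i) := by
          gcongr
          refine le_trans natDegree_mul_le ?_
          gcongr
          · simp
          · refine le_trans natDegree_pow_le ?_
            have : ((X:ℚ[X]) ^ 2 + 1).natDegree = 2 := by compute_degree!
            rw [this]; ring_nf; omega
      _ < 2 * h.natDegree := by omega
  · intro hm
    simp at hm




noncomputable section CycPsiAux



lemma cyc_dickson_deg_le (n : ℕ) : (dickson 1 (1:ℤ) n).natDegree ≤ n := by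
  rcases n with _ | m
  · rw [dickson_zero]
    norm_num
  · exact le_of_eq (cyc_dickson_monic_deg (m+1) (by omega)).2

lemma cyc_sum_palindrome {M : Type*} [AddCommGroup M] (n : ℕ) (f : ℕ → M) :
    ∑ j ∈ range (2*n+1), f j = (∑ i ∈ range (n+1), (f (n+i) + f (n-i))) - f n := by
  have h1 : ∑ i ∈ range (n+1), f (n+i) = ∑ j ∈ Ico n (2*n+1), f j := by
    rw [Finset.sum_Ico_eq_sum_range, show 2*n+1-n = n+1 from by omega]
  have h2 : ∑ i ∈ range (n+1), f (n-i) = ∑ j ∈ range (n+1), f j := by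
    have := Finset.sum_range_reflect f (n+1)
    simp only [Nat.add_sub_cancel] at this
    exact this
  rw [sum_add_distrib, h1, h2,
    ← Finset.sum_range_add_sum_Ico f (show n ≤ 2*n+1 by omega), sum_range_succ]
  abel

/-- The candidate polynomial. -/
noncomputable def cycPsi (k : ℕ) : ℤ[X] :=
  (∑ i ∈ Finset.range (k.totient/2 + 1),
      C ((cyclotomic k ℤ).coeff (k.totient/2 + i)) * dickson 1 1 i)
    - C ((cyclotomic k ℤ).coeff (k.totient/2))

variable {k : ℕ}

lemma cyc_two_n (hk : 3 ≤ k) : 2 * (k.totient/2) = k.totient ∧ 1 ≤ k.totient/2 := by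
  obtain ⟨m, hm⟩ := Nat.totient_even (by omega : 2 < k)
  have hpos : 0 < k.totient := Nat.totient_pos.mpr (by omega)
  omega

lemma cycPsi_decomp (hk : 3 ≤ k) :
    cycPsi k = dickson 1 1 (k.totient/2) +
      ((∑ i ∈ Finset.range (k.totient/2),
        C ((cyclotomic k ℤ).coeff (k.totient/2 + i)) * dickson 1 1 i)
        - C ((cyclotomic k ℤ).coeff (k.totient/2))) := by
  obtain ⟨h2n, hn⟩ := cyc_two_n hk
  have htop : (cyclotomic k ℤ).coeff (k.totient/2 + k.totient/2) = 1 := by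
    have := (cyclotomic.monic k ℤ).coeff_natDegree
    rwa [natDegree_cyclotomic, show k.totient = k.totient/2 + k.totient/2 by omega] at this
  rw [cycPsi, sum_range_succ, htop, map_one, one_mul]
  ring

lemma cycPsi_monic_deg (hk : 3 ≤ k) :
    (cycPsi k).Monic ∧ (cycPsi k).natDegree = k.totient/2 := by
  obtain ⟨h2n, hn⟩ := cyc_two_n hk
  set n := k.totient/2
  set E := (∑ i ∈ Finset.range n,
      C ((cyclotomic k ℤ).coeff (n + i)) * dickson 1 1 i)
      - C ((cyclotomic k ℤ).coeff n) with hE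
  have hEdeg : E.natDegree ≤ n - 1 := by
    refine le_trans (natDegree_sub_le _ _) (max_le ?_ (by simp))
    refine natDegree_sum_le_of_forall_le _ _ fun i hi => ?_
    rw [Finset.mem_range] at hi
    refine le_trans natDegree_mul_le ?_
    have := cyc_dickson_deg_le i
    simp only [natDegree_C]
    omega
  have hDdeg := (cyc_dickson_monic_deg n hn)
  have hlt : E.degree < (dickson 1 (1:ℤ) n).degree := by
    calc E.degree ≤ (E.natDegree : WithBot ℕ) := degree_le_natDegree
      _ ≤ ((n-1 : ℕ) : WithBot ℕ) := by exact_mod_cast hEdeg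
      _ < ((n : ℕ) : WithBot ℕ) := by exact_mod_cast (by omega : n - 1 < n)
      _ = (dickson 1 (1:ℤ) n).degree := by
          rw [degree_eq_natDegree hDdeg.1.ne_zero, hDdeg.2]
  rw [cycPsi_decomp hk]
  exact ⟨hDdeg.1.add_of_left hlt,
    by rw [natDegree_add_eq_left_of_degree_lt hlt, hDdeg.2]⟩

end CycPsiAux


lemma cycPsi_eval {k : ℕ} (hk : 3 ≤ k) :
    aeval (qX : Fq) (cyclotomic k ℤ) =
      qX ^ (k.totient/2) * aeval ((qX : Fq) + qX⁻¹) (cycPsi k) := by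
  obtain ⟨h2n, hn⟩ := cyc_two_n hk
  set n := k.totient/2 with hndef
  set a : ℕ → Fq := fun j => ((cyclotomic k ℤ).coeff j : Fq) with ha
  have hpal : ∀ i ≤ n, a (n+i) = a (n-i) := by
    intro i hi
    have := cyclo_palindrome (show 2 ≤ k by omega) (show n+i ≤ k.totient by omega)
    rw [show k.totient - (n+i) = n - i by omega] at this
    rw [ha]
    exact congrArg (fun z : ℤ => (z : Fq)) this.symm
  have hL : aeval (qX : Fq) (cyclotomic k ℤ) = ∑ j ∈ range (2*n+1), a j * qX ^ j := by
    rw [aeval_eq_sum_range, natDegree_cyclotomic, show k.totient = 2*n by omega]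
    refine Finset.sum_congr rfl fun j _ => ?_
    simp [ha, Algebra.smul_def, algebraMap_int_eq]
  have hR : aeval ((qX : Fq) + qX⁻¹) (cycPsi k) =
      (∑ i ∈ range (n+1), a (n+i) * (qX^i + (qX⁻¹)^i)) - a n := by
    rw [cycPsi]
    simp only [map_sub, map_sum, map_mul, aeval_C, aeval_dickson, algebraMap_int_eq,
      eq_intCast, map_intCast, ← hndef]
    rfl
  have step : ∀ i ∈ range (n+1),
      (qX:Fq)^n * (a (n+i) * (qX^i + (qX⁻¹)^i)) =
        a (n+i) * qX^(n+i) + a (n-i) * qX^(n-i) := by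
    intro i hi
    rw [Finset.mem_range] at hi
    have h1 : (qX:Fq)^n * (qX⁻¹)^i = qX^(n-i) := pow_inv_pow (by omega)
    calc (qX:Fq)^n * (a (n+i) * (qX^i + (qX⁻¹)^i))
        = a (n+i) * (qX^n * qX^i) + a (n+i) * (qX^n * (qX⁻¹)^i) := by ring
      _ = a (n+i) * qX^(n+i) + a (n-i) * qX^(n-i) := by
          rw [← pow_add, h1, hpal i (by omega)]
  rw [hL, hR, mul_sub, Finset.mul_sum, Finset.sum_congr rfl step,
    cyc_sum_palindrome n (fun j => a j * qX^j)]
  ring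

theorem exists_psi_of_cyclotomic (k : ℕ) (hk : 3 ≤ k) :
    ∃ ψ : Polynomial ℤ, ψ.Monic ∧ ψ.natDegree = Nat.totient k / 2 ∧
      Irreducible (ψ.map (Int.castRingHom ℚ)) ∧
      aeval (RatFunc.X : RatFunc ℚ) (Polynomial.cyclotomic k ℤ) =
        (RatFunc.X : RatFunc ℚ) ^ (Nat.totient k / 2) *
          aeval ((RatFunc.X : RatFunc ℚ) + (RatFunc.X : RatFunc ℚ)⁻¹) ψ := by
  obtain ⟨h2n, hn⟩ := cyc_two_n hk
  obtain ⟨hmonic, hdeg⟩ := cycPsi_monic_deg hk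
  have heval := cycPsi_eval hk
  set n := k.totient/2 with hndef
  refine ⟨cycPsi k, hmonic, hdeg, ?_, heval⟩
  -- irreducibility over ℚ
  set ψQ : ℚ[X] := (cycPsi k).map (Int.castRingHom ℚ) with hψQ
  have hψQmonic : ψQ.Monic := hmonic.map _
  have hψQdeg : ψQ.natDegree = n := by
    rw [hψQ, hmonic.natDegree_map, hdeg]
  have haux : ∀ p : ℤ[X], ∀ x : Fq, aeval x (p.map (Int.castRingHom ℚ)) = aeval x p := by
    intro p x
    rw [aeval_def, eval₂_map, aeval_def]
    congr 1
    exact RingHom.ext_int _ _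
  have haevalψQ : ∀ x : Fq, aeval x ψQ = aeval x (cycPsi k) := by
    intro x
    rw [hψQ, haux]
  have hcycQ : aeval (qX : Fq) (cyclotomic k ℚ) = aeval (qX : Fq) (cyclotomic k ℤ) := by
    rw [← map_cyclotomic k (Int.castRingHom ℚ), haux]
  constructor
  · exact not_isUnit_of_natDegree_pos _ (by omega)
  · intro f g hfg
    by_contra hcon
    push_neg at hcon
    obtain ⟨hf, hg⟩ := hcon
    have hf0 : f ≠ 0 := by rintro rfl; exact hψQmonic.ne_zero (by rw [hfg, zero_mul])
    have hg0 : g ≠ 0 := by rintro rfl; exact hψQmonic.ne_zero (by rw [hfg, mul_zero])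
    have hdeg_pos : ∀ h : ℚ[X], h ≠ 0 → ¬ IsUnit h → 0 < h.natDegree := by
      intro h hne hnu
      by_contra hc
      push_neg at hc
      have h0 : h.natDegree = 0 := by omega
      refine hnu ?_
      rw [eq_C_of_natDegree_eq_zero h0]
      refine isUnit_C.mpr (isUnit_iff_ne_zero.mpr fun hc0 => hne ?_)
      rw [eq_C_of_natDegree_eq_zero h0, hc0, map_zero]
    have hdf : 0 < f.natDegree := hdeg_pos f hf0 hf
    have hdg : 0 < g.natDegree := hdeg_pos g hg0 hg
    have hsum : f.natDegree + g.natDegree = n := by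
      rw [← natDegree_mul hf0 hg0, ← hfg, hψQdeg]
    have hTne : ∀ h : ℚ[X], h ≠ 0 → 0 < h.natDegree → ¬ IsUnit (Tpoly h) := by
      intro h hne hpos
      apply not_isUnit_of_natDegree_pos
      have hco : (Tpoly h).coeff (2 * h.natDegree) ≠ 0 := by
        rw [coeff_Tpoly]; exact leadingCoeff_ne_zero.mpr hne
      have := le_natDegree_of_ne_zero hco
      omega
    have heqT : Tpoly f * Tpoly g = cyclotomic k ℚ := by
      apply aeval_qX_injective
      show aeval (qX:Fq) (Tpoly f * Tpoly g) = aeval (qX:Fq) (cyclotomic k ℚ)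
      rw [map_mul, aeval_Tpoly, aeval_Tpoly, hcycQ, heval, ← haevalψQ, hfg, map_mul,
        ← hsum, pow_add]
      ring
    have hirr : Irreducible (cyclotomic k ℚ) := cyclotomic.irreducible_rat (by omega)
    rcases hirr.isUnit_or_isUnit heqT.symm with h | h
    · exact hTne f hf0 hdf h
    · exact hTne g hg0 hdg h

end
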